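/- (Polar relation of critical cones.) Let g : ℝᵐ → ℝ ∪ {∞} be a polyhedral function and (z̄, λ̄) ∈ gph ∂g. Then K_g(z̄, λ̄) = (K_{g*}(λ̄, z̄))*, i.e., the critical cone of g at z̄ for λ̄ is the polar of the critical cone of the Fenchel conjugate g* at λ̄ for z̄. -/

import Mathlib

open Filter Topology Set Metric

noncomputable section

/-- A polyhedral convex set: a finite intersection of closed half-spaces. -/
def IsPolyhedralSet {E : Type*} [AddCommGroup E] [Module ℝ E] (C : Set E) : Prop :=
  ∃ (s : ℕ) (b : Fin s → (E →ₗ[ℝ] ℝ)) (β : Fin s → ℝ), C = {x | ∀ i, b i x ≤ β i}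

/-- A polyhedral function: proper (never `⊥`, somewhere finite) with polyhedral epigraph. -/
def IsPolyhedralFn {E : Type*} [AddCommGroup E] [Module ℝ E] (g : E → EReal) : Prop :=
  (∃ z, g z ≠ ⊤) ∧ (∀ z, g z ≠ ⊥) ∧
    IsPolyhedralSet {p : E × ℝ | g p.1 ≤ (p.2 : EReal)}

/-- Tangent cone to a convex set: closure of the cone of feasible directions. -/
def tcone {E : Type*} [NormedAddCommGroup E] [NormedSpace ℝ E] (C : Set E) (x : E) : Set E :=
  closure {w | ∃ t : ℝ, 0 < t ∧ x + t • w ∈ C}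

/-- Convex subdifferential of an extended-real-valued function. -/
def subdiff {E : Type*} [NormedAddCommGroup E] [InnerProductSpace ℝ E]
    (g : E → EReal) (z : E) : Set E :=
  {v | ∀ x, g z + ((inner ℝ v (x - z) : ℝ) : EReal) ≤ g x}

/-- Subderivative: `dg(z)(w) = liminf_{t↓0, w'→w} (g(z+tw')-g(z))/t`. -/
def subderiv {E : Type*} [NormedAddCommGroup E] [NormedSpace ℝ E]
    (g : E → EReal) (z : E) (w : E) : EReal :=
  Filter.liminf (fun p : ℝ × E => (g (z + p.1 • p.2) - g z) * (((p.1)⁻¹ : ℝ) : EReal))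
    ((nhdsWithin 0 (Set.Ioi (0 : ℝ))) ×ˢ 𝓝 w)

/-- Critical cone `K_g(z,v) = {w | dg(z)(w) = ⟨v,w⟩}`. -/
def Kcone {E : Type*} [NormedAddCommGroup E] [InnerProductSpace ℝ E]
    (g : E → EReal) (z v : E) : Set E :=
  {w | subderiv g z w = ((inner ℝ v w : ℝ) : EReal)}

/-- Normal cone of convex analysis. -/
def ncone {E : Type*} [NormedAddCommGroup E] [InnerProductSpace ℝ E]
    (C : Set E) (x : E) : Set E :=
  {v | ∀ y ∈ C, (inner ℝ v (y - x) : ℝ) ≤ 0}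

/-- A set is a linear subspace. -/
def IsLinSubspace {E : Type*} [AddCommGroup E] [Module ℝ E] (K : Set E) : Prop :=
  ∃ S : Submodule ℝ E, K = ↑S

/-- Polar cone. -/
def polarCone {E : Type*} [NormedAddCommGroup E] [InnerProductSpace ℝ E] (K : Set E) : Set E :=
  {u | ∀ w ∈ K, (inner ℝ u w : ℝ) ≤ 0}

/-- Fenchel conjugate. -/
def fconj {E : Type*} [NormedAddCommGroup E] [InnerProductSpace ℝ E]
    (g : E → EReal) (v : E) : EReal :=
  ⨆ z, ((inner ℝ v z : ℝ) : EReal) - g z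

/-- Bouligand (contingent) tangent cone, via sequences. -/
def btcone {E : Type*} [NormedAddCommGroup E] [NormedSpace ℝ E] (Ω : Set E) (x : E) : Set E :=
  {w | ∃ (t : ℕ → ℝ) (v : ℕ → E), (∀ n, 0 < t n) ∧ Tendsto t atTop (𝓝 0) ∧
      Tendsto v atTop (𝓝 w) ∧ ∀ n, x + t n • v n ∈ Ω}

/-- Clarke (regular) tangent cone, via sequences. -/
def clarkeT {E : Type*} [NormedAddCommGroup E] [NormedSpace ℝ E] (Ω : Set E) (xb : E) : Set E :=
  {w | ∀ (x : ℕ → E) (t : ℕ → ℝ), (∀ n, x n ∈ Ω) → Tendsto x atTop (𝓝 xb) →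
      (∀ n, 0 < t n) → Tendsto t atTop (𝓝 0) →
      ∃ v : ℕ → E, Tendsto v atTop (𝓝 w) ∧ ∀ n, x n + t n • v n ∈ Ω}

/-- Paratingent cone, via sequences. -/
def paraT {E : Type*} [NormedAddCommGroup E] [NormedSpace ℝ E] (Ω : Set E) (xb : E) : Set E :=
  {w | ∃ (x : ℕ → E) (t : ℕ → ℝ) (v : ℕ → E), (∀ n, x n ∈ Ω) ∧ Tendsto x atTop (𝓝 xb) ∧
      (∀ n, 0 < t n) ∧ Tendsto t atTop (𝓝 0) ∧ Tendsto v atTop (𝓝 w) ∧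
      ∀ n, x n + t n • v n ∈ Ω}
section Helpers

open Filter

variable {F : Type*} [NormedAddCommGroup F] [InnerProductSpace ℝ F]

lemma subdiff_finite {g : F → EReal} (hp : ∃ z, g z ≠ ⊤) {x v : F} (hbx : g x ≠ ⊥)
    (hv : v ∈ subdiff g x) : ∃ ρ : ℝ, g x = (ρ : EReal) := by
  obtain ⟨z0, hz0⟩ := hp
  refine ⟨(g x).toReal, (EReal.coe_toReal ?_ hbx).symm⟩
  intro htop
  have h := hv z0
  rw [htop, EReal.top_add_coe] at h
  exact hz0 (top_le_iff.mp h)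

lemma subderiv_ge {g : F → EReal} {x v w : F} {ρ : ℝ} (hx : g x = (ρ : EReal))
    (hv : v ∈ subdiff g x) : ((inner ℝ v w : ℝ) : EReal) ≤ subderiv g x w := by
  have hten : Tendsto (fun p : ℝ × F => ((inner ℝ v p.2 : ℝ) : EReal))
      ((𝓝[>] (0:ℝ)) ×ˢ 𝓝 w) (𝓝 ((inner ℝ v w : ℝ) : EReal)) := by
    have hc : Continuous (fun y : F => ((inner ℝ v y : ℝ) : EReal)) :=
      continuous_coe_real_ereal.comp (continuous_const.inner continuous_id)
    exact (hc.tendsto w).comp tendsto_snd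
  have hev : ∀ᶠ p : ℝ × F in (𝓝[>] (0:ℝ)) ×ˢ 𝓝 w,
      ((inner ℝ v p.2 : ℝ) : EReal) ≤ (g (x + p.1 • p.2) - g x) * ((p.1⁻¹ : ℝ) : EReal) := by
    filter_upwards [(eventually_mem_nhdsWithin (s := Set.Ioi (0:ℝ))).prod_inl (𝓝 w)] with p hp
    have ht : (0:ℝ) < p.1 := hp
    have h := hv (x + p.1 • p.2)
    rw [add_sub_cancel_left, real_inner_smul_right, hx] at h
    rw [hx]
    rcases eq_or_ne (g (x + p.1 • p.2)) ⊤ with hG | hG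
    · rw [hG, EReal.top_sub_coe, EReal.top_mul_of_pos]
      · exact le_top
      · exact_mod_cast inv_pos.mpr ht
    · have hGb : g (x + p.1 • p.2) ≠ ⊥ := by
        rw [← EReal.coe_add] at h
        exact ((EReal.bot_lt_coe _).trans_le h).ne'
      set σ := (g (x + p.1 • p.2)).toReal with hσdef
      have hσ : g (x + p.1 • p.2) = (σ : EReal) := (EReal.coe_toReal hG hGb).symm
      rw [hσ, ← EReal.coe_add] at h
      rw [hσ, ← EReal.coe_sub, ← EReal.coe_mul, EReal.coe_le_coe_iff]
      have h' : ρ + p.1 * inner ℝ v p.2 ≤ σ := by exact_mod_cast h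
      rw [← div_eq_mul_inv, le_div_iff₀ ht]
      nlinarith [h']
  calc ((inner ℝ v w : ℝ) : EReal)
      = liminf (fun p : ℝ × F => ((inner ℝ v p.2 : ℝ) : EReal)) ((𝓝[>] (0:ℝ)) ×ˢ 𝓝 w) :=
        (hten.liminf_eq).symm
    _ ≤ subderiv g x w := liminf_le_liminf hev

lemma subderiv_le_seg {g : F → EReal} {x w : F} {ρ c : ℝ} (hx : g x = (ρ : EReal))
    {t : ℝ} (ht : 0 < t)
    (hseg : ∀ s : ℝ, 0 < s → s ≤ t → g (x + s • w) = ((ρ + s * c : ℝ) : EReal)) :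
    subderiv g x w ≤ (c : EReal) := by
  have hmap : map (fun s : ℝ => ((s, w) : ℝ × F)) (𝓝[>] (0:ℝ)) ≤ (𝓝[>] (0:ℝ)) ×ˢ 𝓝 w :=
    Tendsto.prodMk tendsto_id tendsto_const_nhds
  have h1 : subderiv g x w ≤ liminf
      ((fun p : ℝ × F => (g (x + p.1 • p.2) - g x) * ((p.1⁻¹ : ℝ) : EReal)) ∘
        (fun s : ℝ => ((s, w) : ℝ × F))) (𝓝[>] (0:ℝ)) := by
    rw [liminf_comp]
    exact liminf_le_liminf_of_le hmap
  refine h1.trans ?_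
  have hev : ∀ᶠ s : ℝ in 𝓝[>] (0:ℝ),
      ((fun p : ℝ × F => (g (x + p.1 • p.2) - g x) * ((p.1⁻¹ : ℝ) : EReal)) ∘
        (fun s : ℝ => ((s, w) : ℝ × F))) s = (c : EReal) := by
    filter_upwards [Ioc_mem_nhdsGT_of_mem (Set.mem_Ico.mpr ⟨le_rfl, ht⟩)] with s hs
    have hs1 : (0:ℝ) < s := hs.1
    simp only [Function.comp_apply]
    rw [hseg s hs.1 hs.2, hx, ← EReal.coe_sub, ← EReal.coe_mul]
    norm_cast
    field_simp
    ring
  rw [liminf_congr hev, liminf_const]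

lemma subderiv_eq_seg {g : F → EReal} {x v w : F} {ρ : ℝ} (hx : g x = (ρ : EReal))
    (hv : v ∈ subdiff g x) {t : ℝ} (ht : 0 < t)
    (hub : ∀ s : ℝ, 0 < s → s ≤ t → g (x + s • w) ≤ ((ρ + s * inner ℝ v w : ℝ) : EReal)) :
    subderiv g x w = ((inner ℝ v w : ℝ) : EReal) := by
  have hseg : ∀ s : ℝ, 0 < s → s ≤ t → g (x + s • w) = ((ρ + s * inner ℝ v w : ℝ) : EReal) := by
    intro s hs hst
    refine le_antisymm (hub s hs hst) ?_
    have h := hv (x + s • w)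
    rw [add_sub_cancel_left, real_inner_smul_right, hx, ← EReal.coe_add] at h
    exact h
  exact le_antisymm (subderiv_le_seg hx ht hseg) (subderiv_ge hx hv)

end Helpers
section Helpers2

open Filter

variable {F : Type*} [NormedAddCommGroup F] [InnerProductSpace ℝ F]

lemma poly_convex {g : F → EReal} {s : ℕ} {b : Fin s → (F × ℝ →ₗ[ℝ] ℝ)} {β : Fin s → ℝ}
    (hE : {p : F × ℝ | g p.1 ≤ (p.2 : EReal)} = {x | ∀ i, b i x ≤ β i})
    {x y : F} {ρ σ θ : ℝ} (hx : g x ≤ (ρ : EReal)) (hy : g y ≤ (σ : EReal))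
    (h0 : 0 ≤ θ) (h1 : θ ≤ 1) :
    g ((1 - θ) • x + θ • y) ≤ (((1 - θ) * ρ + θ * σ : ℝ) : EReal) := by
  have hxE : (x, ρ) ∈ {p : F × ℝ | g p.1 ≤ (p.2 : EReal)} := hx
  have hyE : (y, σ) ∈ {p : F × ℝ | g p.1 ≤ (p.2 : EReal)} := hy
  rw [hE] at hxE hyE
  have hmem : ((1 - θ) • x + θ • y, (1 - θ) * ρ + θ * σ) ∈ {x : F × ℝ | ∀ i, b i x ≤ β i} := by
    intro i
    have heq : (((1 - θ) • x + θ • y, (1 - θ) * ρ + θ * σ) : F × ℝ)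
        = (1 - θ) • ((x, ρ) : F × ℝ) + θ • ((y, σ) : F × ℝ) := by
      simp [Prod.ext_iff, smul_eq_mul]
    rw [heq, map_add, map_smul, map_smul, smul_eq_mul, smul_eq_mul]
    have h2 := hxE i
    have h3 := hyE i
    nlinarith [h2, h3]
  rw [← hE] at hmem
  exact hmem

lemma le_fconj (g : F → EReal) (μ z : F) : ((inner ℝ μ z : ℝ) : EReal) - g z ≤ fconj g μ :=
  le_iSup (fun z => ((inner ℝ μ z : ℝ) : EReal) - g z) z

lemma fconj_eq {g : F → EReal} (hb : ∀ z, g z ≠ ⊥) {z v : F} {ρ : ℝ}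
    (hz : g z = (ρ : EReal)) (hv : v ∈ subdiff g z) :
    fconj g v = ((inner ℝ v z - ρ : ℝ) : EReal) := by
  refine le_antisymm (iSup_le fun x => ?_) ?_
  · rcases eq_or_ne (g x) ⊤ with hx | hx
    · rw [hx, EReal.sub_top]
      exact bot_le
    · have hσ : g x = ((g x).toReal : EReal) := (EReal.coe_toReal hx (hb x)).symm
      set σ := (g x).toReal
      have h := hv x
      rw [hz, hσ] at h
      rw [hσ, ← EReal.coe_sub, EReal.coe_le_coe_iff]
      have h' : ρ + inner ℝ v (x - z) ≤ σ := by exact_mod_cast h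
      rw [inner_sub_right] at h'
      linarith
  · have h := le_fconj g v z
    rw [hz, ← EReal.coe_sub] at h
    exact h

lemma fconj_ne_bot {g : F → EReal} {z : F} {ρ : ℝ} (hz : g z = (ρ : EReal)) (μ : F) :
    fconj g μ ≠ ⊥ := by
  have h := le_fconj g μ z
  rw [hz, ← EReal.coe_sub] at h
  exact ((EReal.bot_lt_coe _).trans_le h).ne'

lemma mem_subdiff_fconj {g : F → EReal} (hb : ∀ z, g z ≠ ⊥) {z v : F} {ρ : ℝ}
    (hz : g z = (ρ : EReal)) (hv : v ∈ subdiff g z) : z ∈ subdiff (fconj g) v := by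
  intro μ
  rw [fconj_eq hb hz hv, ← EReal.coe_add]
  have heq : inner ℝ v z - ρ + inner ℝ z (μ - v) = inner ℝ μ z - ρ := by
    rw [inner_sub_right, real_inner_comm z μ, real_inner_comm z v]
    ring
  rw [heq, EReal.coe_sub, ← hz]
  exact le_fconj g μ z

lemma mem_subdiff_iff {g : F → EReal} (hb : ∀ z, g z ≠ ⊥) {zb lb : F} {r : ℝ}
    (hgz : g zb = (r : EReal)) (hl : lb ∈ subdiff g zb) (z : F) :
    lb ∈ subdiff g z ↔ g z ≤ ((r - inner ℝ lb zb + inner ℝ lb z : ℝ) : EReal) := by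
  constructor
  · intro h
    have h2 := h zb
    rcases eq_or_ne (g z) ⊤ with hz | hz
    · rw [hz, EReal.top_add_coe, hgz, top_le_iff] at h2
      exact absurd h2 (EReal.coe_ne_top r)
    · have hσ : g z = ((g z).toReal : EReal) := (EReal.coe_toReal hz (hb z)).symm
      set σ := (g z).toReal
      rw [hσ, hgz, ← EReal.coe_add, EReal.coe_le_coe_iff] at h2
      rw [hσ, EReal.coe_le_coe_iff]
      rw [inner_sub_right] at h2
      linarith
  · intro h x
    have h3 := hl x
    rw [hgz, ← EReal.coe_add] at h3
    calc g z + ((inner ℝ lb (x - z) : ℝ) : EReal)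
        ≤ ((r - inner ℝ lb zb + inner ℝ lb z : ℝ) : EReal) + ((inner ℝ lb (x - z) : ℝ) : EReal) :=
          add_le_add_left h _
      _ = ((r + inner ℝ lb (x - zb) : ℝ) : EReal) := by
          rw [← EReal.coe_add]
          norm_cast
          rw [inner_sub_right, inner_sub_right]
          ring
      _ ≤ g x := h3

lemma mem_Kcone_of_dir {g : F → EReal} {x v w : F} {ρ : ℝ}
    (hx : g x = (ρ : EReal)) (hv : v ∈ subdiff g x) {t : ℝ} (ht : 0 < t)
    (hmem : v ∈ subdiff g (x + t • w))
    (hconv : ∀ θ : ℝ, 0 ≤ θ → θ ≤ 1 → ∀ B : ℝ, g (x + t • w) ≤ (B : EReal) →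
      g ((1 - θ) • x + θ • (x + t • w)) ≤ (((1 - θ) * ρ + θ * B : ℝ) : EReal)) :
    w ∈ Kcone g x v := by
  have ht' : t ≠ 0 := ht.ne'
  -- finiteness and value of g (x + t • w)
  have h1 := hv (x + t • w)
  rw [add_sub_cancel_left, real_inner_smul_right, hx, ← EReal.coe_add] at h1
  have h2 := hmem x
  have hxd : x - (x + t • w) = -(t • w) := by abel
  rw [hxd, inner_neg_right, real_inner_smul_right, hx] at h2
  have hGtop : g (x + t • w) ≠ ⊤ := by
    intro hG
    rw [hG, EReal.top_add_coe, top_le_iff] at h2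
    exact EReal.coe_ne_top ρ h2
  have hGbot : g (x + t • w) ≠ ⊥ := ((EReal.bot_lt_coe _).trans_le h1).ne'
  have hσ : g (x + t • w) = ((g (x + t • w)).toReal : EReal) := (EReal.coe_toReal hGtop hGbot).symm
  set σ := (g (x + t • w)).toReal
  rw [hσ, EReal.coe_le_coe_iff] at h1
  rw [hσ, ← EReal.coe_add, EReal.coe_le_coe_iff] at h2
  have hσval : σ = ρ + t * inner ℝ v w := by linarith
  -- upper bound on segment
  have hub : ∀ s : ℝ, 0 < s → s ≤ t → g (x + s • w) ≤ ((ρ + s * inner ℝ v w : ℝ) : EReal) := by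
    intro s hs hst
    have hθ0 : 0 ≤ s / t := by positivity
    have hθ1 : s / t ≤ 1 := by rw [div_le_one ht]; exact hst
    have hc := hconv (s / t) hθ0 hθ1 σ (le_of_eq hσ)
    have hpt : (1 - s / t) • x + (s / t) • (x + t • w) = x + s • w := by
      rw [smul_add, smul_smul, ← add_assoc, ← add_smul]
      rw [div_mul_cancel₀ _ ht']
      rw [sub_add_cancel, one_smul]
    have hval : (1 - s / t) * ρ + (s / t) * σ = ρ + s * inner ℝ v w := by
      rw [hσval]
      field_simp
      ring
    rw [hpt, hval] at hc
    exact hc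
  exact subderiv_eq_seg hx hv ht hub

lemma fconj_segment {g : F → EReal} (hb : ∀ z, g z ≠ ⊥) {μ ν : F} {A B θ : ℝ}
    (hμ : fconj g μ ≤ (A : EReal)) (hν : fconj g ν ≤ (B : EReal)) (h0 : 0 ≤ θ) (h1 : θ ≤ 1) :
    fconj g ((1 - θ) • μ + θ • ν) ≤ (((1 - θ) * A + θ * B : ℝ) : EReal) := by
  refine iSup_le fun x => ?_
  rcases eq_or_ne (g x) ⊤ with hx | hx
  · rw [hx, EReal.sub_top]
    exact bot_le
  · have hσ : g x = ((g x).toReal : EReal) := (EReal.coe_toReal hx (hb x)).symm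
    set σ := (g x).toReal
    have hμx : inner ℝ μ x - σ ≤ A := by
      have h := (le_fconj g μ x).trans hμ
      rw [hσ, ← EReal.coe_sub, EReal.coe_le_coe_iff] at h
      exact h
    have hνx : inner ℝ ν x - σ ≤ B := by
      have h := (le_fconj g ν x).trans hν
      rw [hσ, ← EReal.coe_sub, EReal.coe_le_coe_iff] at h
      exact h
    rw [hσ, ← EReal.coe_sub, EReal.coe_le_coe_iff]
    rw [inner_add_left, real_inner_smul_left, real_inner_smul_left]
    nlinarith [hμx, hνx]

end Helpers2
/-- Polar relation of critical cones:
`K_g(zb,lb) = (K_{g*}(lb,zb))*`. -/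
theorem stmt6 {m : ℕ} (g : EuclideanSpace ℝ (Fin m) → EReal) (hg : IsPolyhedralFn g)
    (zb lb : EuclideanSpace ℝ (Fin m)) (hl : lb ∈ subdiff g zb) :
    Kcone g zb lb = polarCone (Kcone (fconj g) lb zb) := by
  obtain ⟨hp, hb, s, b, β, hE⟩ := hg
  obtain ⟨r, hgz⟩ := subdiff_finite hp (hb zb) hl
  set φ : Fin s → EuclideanSpace ℝ (Fin m) → ℝ :=
    fun i z => b i (z, (inner ℝ lb z : ℝ)) with hφdef
  set c : Fin s → ℝ := fun i => b i (0, 1) with hcdef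
  have hdec : ∀ (i : Fin s) (z : EuclideanSpace ℝ (Fin m)) (α : ℝ),
      b i (z, α) = φ i z + (α - inner ℝ lb z) * c i := by
    intro i z α
    have h1 : ((z, α) : EuclideanSpace ℝ (Fin m) × ℝ)
        = (z, (inner ℝ lb z : ℝ)) + (α - inner ℝ lb z) • ((0 : EuclideanSpace ℝ (Fin m)), (1:ℝ)) := by
      simp [Prod.ext_iff, smul_eq_mul]
    rw [h1, map_add, map_smul, smul_eq_mul]
  have hφlin : ∀ (i : Fin s) (z1 z2 : EuclideanSpace ℝ (Fin m)) (t : ℝ),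
      φ i (z1 + t • z2) = φ i z1 + t * φ i z2 := by
    intro i z1 z2 t
    have h1 : ((z1 + t • z2, (inner ℝ lb (z1 + t • z2) : ℝ)) : EuclideanSpace ℝ (Fin m) × ℝ)
        = (z1, (inner ℝ lb z1 : ℝ)) + t • ((z2, (inner ℝ lb z2 : ℝ)) : EuclideanSpace ℝ (Fin m) × ℝ) := by
      have hir : (inner ℝ lb (z1 + t • z2) : ℝ) = (inner ℝ lb z1 : ℝ) + t * (inner ℝ lb z2 : ℝ) := by
        rw [inner_add_right, real_inner_smul_right]
      simp [Prod.ext_iff, hir, smul_eq_mul]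
    simp only [hφdef]
    rw [h1, map_add, map_smul, smul_eq_mul]
  have hCiff : ∀ z, (lb ∈ subdiff g z ↔ ∀ i, φ i z + (r - inner ℝ lb zb) * c i ≤ β i) := by
    intro z
    rw [mem_subdiff_iff hb hgz hl z]
    constructor
    · intro h i
      have hm : ((z, r - inner ℝ lb zb + inner ℝ lb z) : EuclideanSpace ℝ (Fin m) × ℝ)
          ∈ {x : EuclideanSpace ℝ (Fin m) × ℝ | ∀ i, b i x ≤ β i} := by
        rw [← hE]; exact h
      have h2 := hm i
      rw [hdec] at h2
      have h3 : r - inner ℝ lb zb + inner ℝ lb z - inner ℝ lb z = r - inner ℝ lb zb := by ring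
      rw [h3] at h2
      exact h2
    · intro h
      have hm : ((z, r - inner ℝ lb zb + inner ℝ lb z) : EuclideanSpace ℝ (Fin m) × ℝ)
          ∈ {x : EuclideanSpace ℝ (Fin m) × ℝ | ∀ i, b i x ≤ β i} := by
        intro i
        rw [hdec]
        have h3 : r - inner ℝ lb zb + inner ℝ lb z - inner ℝ lb z = r - inner ℝ lb zb := by ring
        rw [h3]
        exact h i
      rw [← hE] at hm
      exact hm
  -- hK1 : critical directions satisfy active inequalities
  have hK1 : ∀ w, w ∈ Kcone g zb lb →
      ∀ i, φ i zb + (r - inner ℝ lb zb) * c i = β i → φ i w ≤ 0 := by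
    intro w hw i hact
    have hw' : Filter.liminf (fun p : ℝ × EuclideanSpace ℝ (Fin m) =>
        (g (zb + p.1 • p.2) - g zb) * ((p.1⁻¹ : ℝ) : EReal)) ((𝓝[>] (0:ℝ)) ×ˢ 𝓝 w)
        = ((inner ℝ lb w : ℝ) : EReal) := hw
    have key : ∀ ε : ℝ, 0 < ε → φ i w + ε * c i ≤ 0 := by
      intro ε hε
      have hlt : Filter.liminf (fun p : ℝ × EuclideanSpace ℝ (Fin m) =>
          (g (zb + p.1 • p.2) - g zb) * ((p.1⁻¹ : ℝ) : EReal)) ((𝓝[>] (0:ℝ)) ×ˢ 𝓝 w)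
          < ((inner ℝ lb w + ε : ℝ) : EReal) := by
        rw [hw']
        exact_mod_cast (lt_add_iff_pos_right _).mpr hε
      have hfreq := Filter.frequently_lt_of_liminf_lt (by isBoundedDefault) hlt
      have hfreq2 : ∃ᶠ p : ℝ × EuclideanSpace ℝ (Fin m) in (𝓝[>] (0:ℝ)) ×ˢ 𝓝 w,
          φ i p.2 + (inner ℝ lb w + ε - inner ℝ lb p.2) * c i ≤ 0 := by
        refine (hfreq.and_eventually
          ((eventually_mem_nhdsWithin (s := Set.Ioi (0:ℝ))).prod_inl _)).mono ?_
        rintro ⟨t, w'⟩ ⟨hlt', ht⟩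
        have ht0 : (0:ℝ) < t := ht
        rcases eq_or_ne (g (zb + t • w')) ⊤ with hG | hG
        · exfalso
          rw [hgz] at hlt'
          rw [hG, EReal.top_sub_coe, EReal.top_mul_of_pos] at hlt'
          · exact not_top_lt hlt'
          · exact_mod_cast inv_pos.mpr ht0
        · have hGb := hb (zb + t • w')
          have hσ : g (zb + t • w') = ((g (zb + t • w')).toReal : EReal) :=
            (EReal.coe_toReal hG hGb).symm
          set σ := (g (zb + t • w')).toReal with hσdef
          rw [hσ, hgz, ← EReal.coe_sub, ← EReal.coe_mul, EReal.coe_lt_coe_iff] at hlt'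
          rw [← div_eq_mul_inv, div_lt_iff₀ ht0] at hlt'
          have hσlt : σ < r + t * (inner ℝ lb w + ε) := by nlinarith [hlt']
          have hmemE : ((zb + t • w', r + t * (inner ℝ lb w + ε)) :
              EuclideanSpace ℝ (Fin m) × ℝ) ∈
              {p : EuclideanSpace ℝ (Fin m) × ℝ | g p.1 ≤ (p.2 : EReal)} := by
            show g (zb + t • w') ≤ _
            rw [hσ]
            exact_mod_cast hσlt.le
          rw [hE] at hmemE
          have h3 := hmemE i
          rw [hdec, hφlin] at h3
          rw [inner_add_right, real_inner_smul_right] at h3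
          have hX : t * (φ i w' + (inner ℝ lb w + ε - inner ℝ lb w') * c i) ≤ 0 := by
            nlinarith [h3, hact]
          by_contra hcon
          push_neg at hcon
          nlinarith [hX, mul_pos ht0 hcon]
      have hfreq3 : ∃ᶠ y in 𝓝 w, φ i y + (inner ℝ lb w + ε - inner ℝ lb y) * c i ≤ 0 := by
        rw [← Filter.map_snd_prod (𝓝[>] (0:ℝ)) (𝓝 w), Filter.frequently_map]
        exact hfreq2
      have hclosed : IsClosed {y : EuclideanSpace ℝ (Fin m) |
          φ i y + (inner ℝ lb w + ε - inner ℝ lb y) * c i ≤ 0} := by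
        apply isClosed_le _ continuous_const
        have hφc : Continuous (φ i) := by
          have hpc : Continuous fun z : EuclideanSpace ℝ (Fin m) =>
              ((z, (inner ℝ lb z : ℝ)) : EuclideanSpace ℝ (Fin m) × ℝ) :=
            continuous_id.prodMk (continuous_const.inner continuous_id)
          exact ((b i).continuous_of_finiteDimensional).comp hpc
        exact hφc.add
          ((continuous_const.sub (continuous_const.inner continuous_id)).mul continuous_const)
      have hcl : w ∈ {y : EuclideanSpace ℝ (Fin m) |
          φ i y + (inner ℝ lb w + ε - inner ℝ lb y) * c i ≤ 0} := by
        rw [← hclosed.closure_eq]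
        exact mem_closure_iff_frequently.mpr hfreq3
      have h4 : φ i w + (inner ℝ lb w + ε - inner ℝ lb w) * c i ≤ 0 := hcl
      linarith [h4]
    by_contra hpos
    push_neg at hpos
    have h1 := key (φ i w / (2 * (|c i| + 1))) (by positivity)
    have habs : -(|c i|) ≤ c i := neg_abs_le _
    have h2 : φ i w / (2 * (|c i| + 1)) * (-(|c i|)) ≤ φ i w / (2 * (|c i| + 1)) * c i :=
      mul_le_mul_of_nonneg_left habs (by positivity)
    have h3 : φ i w / (2 * (|c i| + 1)) * |c i| < φ i w / 2 := by
      rw [div_mul_eq_mul_div, div_lt_iff₀ (by positivity)]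
      nlinarith [abs_nonneg (c i), hpos]
    linarith
  -- hK2 : active inequalities give a feasible direction
  have hK2 : ∀ w : EuclideanSpace ℝ (Fin m),
      (∀ i, φ i zb + (r - inner ℝ lb zb) * c i = β i → φ i w ≤ 0) →
      ∃ t : ℝ, 0 < t ∧ lb ∈ subdiff g (zb + t • w) := by
    intro w hw
    have hzbC : ∀ i, φ i zb + (r - inner ℝ lb zb) * c i ≤ β i := (hCiff zb).1 hl
    have hev : ∀ᶠ t : ℝ in 𝓝[>] (0:ℝ),
        ∀ i, φ i (zb + t • w) + (r - inner ℝ lb zb) * c i ≤ β i := by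
      rw [Filter.eventually_all]
      intro i
      rcases eq_or_lt_of_le (hzbC i) with hact | hslack
      · filter_upwards [eventually_mem_nhdsWithin (s := Set.Ioi (0:ℝ))] with t ht
        have ht0 : (0:ℝ) < t := ht
        rw [hφlin]
        have htw : t * φ i w ≤ 0 := mul_nonpos_of_nonneg_of_nonpos ht0.le (hw i hact)
        linarith [hact, htw]
      · have hδ0 : 0 < (β i - (φ i zb + (r - inner ℝ lb zb) * c i)) / (|φ i w| + 1) := by
          apply div_pos _ (by positivity)
          linarith
        filter_upwards [Ioo_mem_nhdsGT_of_mem (Set.mem_Ico.mpr ⟨le_rfl, hδ0⟩)] with t htm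
        obtain ⟨ht0, htδ⟩ := htm
        rw [hφlin]
        have h1 : t * φ i w ≤ t * (|φ i w| + 1) :=
          mul_le_mul_of_nonneg_left (by linarith [le_abs_self (φ i w)]) ht0.le
        have h2 : t * (|φ i w| + 1) <
            (β i - (φ i zb + (r - inner ℝ lb zb) * c i)) / (|φ i w| + 1) * (|φ i w| + 1) :=
          mul_lt_mul_of_pos_right htδ (by positivity)
        have h3 : (β i - (φ i zb + (r - inner ℝ lb zb) * c i)) / (|φ i w| + 1) * (|φ i w| + 1)
            = β i - (φ i zb + (r - inner ℝ lb zb) * c i) :=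
          div_mul_cancel₀ _ (by positivity : (0:ℝ) < |φ i w| + 1).ne'
        linarith
    obtain ⟨t, htm⟩ := (hev.and (eventually_mem_nhdsWithin (s := Set.Ioi (0:ℝ)))).exists
    exact ⟨t, htm.2, (hCiff _).2 htm.1⟩
  -- Riesz vectors for the active constraints
  have hriesz : ∀ i : Fin s, ∃ v : EuclideanSpace ℝ (Fin m),
      ∀ z, (inner ℝ v z : ℝ) = φ i z := by
    intro i
    have hφ0 : φ i 0 = 0 := by
      simp only [hφdef]
      simp
      exact (b i).map_zero
    have hadd : ∀ z1 z2, φ i (z1 + z2) = φ i z1 + φ i z2 := by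
      intro z1 z2
      have h := hφlin i z1 z2 1
      rw [one_smul, one_mul] at h
      exact h
    have hsmul : ∀ (a : ℝ) (z : EuclideanSpace ℝ (Fin m)), φ i (a • z) = a * φ i z := by
      intro a z
      have h := hφlin i 0 z a
      rw [zero_add, hφ0, zero_add] at h
      exact h
    set L : EuclideanSpace ℝ (Fin m) →ₗ[ℝ] ℝ :=
      { toFun := φ i, map_add' := hadd, map_smul' := hsmul } with hL
    have hLc : Continuous L := L.continuous_of_finiteDimensional
    refine ⟨(InnerProductSpace.toDual ℝ (EuclideanSpace ℝ (Fin m))).symm ⟨L, hLc⟩, fun z => ?_⟩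
    exact InnerProductSpace.toDual_symm_apply
  choose v hv using hriesz
  -- active constraint directions stay in the subdifferential
  have hDdir : ∀ i : Fin s, φ i zb + (r - inner ℝ lb zb) * c i = β i →
      ∀ t : ℝ, 0 < t → 0 < 1 + t * c i → lb + t • v i ∈ subdiff g zb := by
    intro i hact t ht htc x
    rcases eq_or_ne (g x) ⊤ with hx | hx
    · rw [hx]; exact le_top
    · have hσx : g x = ((g x).toReal : EReal) := (EReal.coe_toReal hx (hb x)).symm
      set σx := (g x).toReal with hσxdef
      have hxE : ((x, σx) : EuclideanSpace ℝ (Fin m) × ℝ) ∈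
          {p : EuclideanSpace ℝ (Fin m) × ℝ | g p.1 ≤ (p.2 : EReal)} := le_of_eq hσx
      rw [hE] at hxE
      have hi := hxE i
      rw [hdec] at hi
      have hsub := hl x
      rw [hgz, hσx, ← EReal.coe_add, EReal.coe_le_coe_iff, inner_sub_right] at hsub
      rw [hgz, hσx, ← EReal.coe_add, EReal.coe_le_coe_iff]
      rw [inner_add_left, real_inner_smul_left, hv i, inner_sub_right]
      have hφsub : φ i (x - zb) = φ i x - φ i zb := by
        have h := hφlin i x zb (-1)
        rw [neg_one_smul, ← sub_eq_add_neg] at h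
        rw [h]; ring
      rw [hφsub]
      have he : 0 ≤ σx - inner ℝ lb x - (r - inner ℝ lb zb) := by linarith
      have hXe : φ i x - φ i zb ≤ -((σx - inner ℝ lb x - (r - inner ℝ lb zb)) * c i) := by
        nlinarith [hi, hact]
      have h5 : t * (φ i x - φ i zb) ≤ t * -((σx - inner ℝ lb x - (r - inner ℝ lb zb)) * c i) :=
        mul_le_mul_of_nonneg_left hXe ht.le
      have h6 : 0 ≤ (σx - inner ℝ lb x - (r - inner ℝ lb zb)) * (1 + t * c i) :=
        mul_nonneg he htc.le
      nlinarith [h5, h6]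
  -- the conjugate function
  have hgsl : fconj g lb = ((inner ℝ lb zb - r : ℝ) : EReal) := fconj_eq hb hgz hl
  have hzs : zb ∈ subdiff (fconj g) lb := mem_subdiff_fconj hb hgz hl
  -- active Riesz vectors lie in the critical cone of the conjugate
  have hvK : ∀ i : Fin s, φ i zb + (r - inner ℝ lb zb) * c i = β i →
      v i ∈ Kcone (fconj g) lb zb := by
    intro i hact
    have ht : (0:ℝ) < 1 / (2 * (|c i| + 1)) := by positivity
    have htc : 0 < 1 + 1 / (2 * (|c i| + 1)) * c i := by
      have h1 : 1 / (2 * (|c i| + 1)) * (-(|c i|)) ≤ 1 / (2 * (|c i| + 1)) * c i :=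
        mul_le_mul_of_nonneg_left (neg_abs_le _) ht.le
      have h2 : 1 / (2 * (|c i| + 1)) * |c i| < 1 := by
        rw [div_mul_eq_mul_div, one_mul, div_lt_iff₀ (by positivity)]
        nlinarith [abs_nonneg (c i)]
      linarith
    have hmem1 : lb + (1 / (2 * (|c i| + 1))) • v i ∈ subdiff g zb := hDdir i hact _ ht htc
    have hmem2 : zb ∈ subdiff (fconj g) (lb + (1 / (2 * (|c i| + 1))) • v i) :=
      mem_subdiff_fconj hb hgz hmem1
    exact mem_Kcone_of_dir hgsl hzs ht hmem2
      (fun θ h0 h1 B hB => fconj_segment hb (le_of_eq hgsl) hB h0 h1)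
  -- final assembly
  apply Set.Subset.antisymm
  · intro w hw u hu
    obtain ⟨t, ht, hmem⟩ := hK2 w (fun i hact => hK1 w hw i hact)
    obtain ⟨σ, hσ⟩ := subdiff_finite hp (hb _) hmem
    have hz' : zb + t • w ∈ subdiff (fconj g) lb := mem_subdiff_fconj hb hσ hmem
    have hlow := subderiv_ge (w := u) hgsl hz'
    have hu' : subderiv (fconj g) lb u = ((inner ℝ zb u : ℝ) : EReal) := hu
    rw [hu', EReal.coe_le_coe_iff, inner_add_left, real_inner_smul_left] at hlow
    by_contra hcon
    push_neg at hcon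
    nlinarith [hlow, mul_pos ht hcon]
  · intro w hw
    have hact : ∀ i, φ i zb + (r - inner ℝ lb zb) * c i = β i → φ i w ≤ 0 := by
      intro i hacti
      have h := hw (v i) (hvK i hacti)
      rw [real_inner_comm] at h
      rw [← hv i w]
      exact h
    obtain ⟨t, ht, hmem⟩ := hK2 w hact
    exact mem_Kcone_of_dir hgz hl ht hmem
      (fun θ h0 h1 B hB => poly_convex hE (le_of_eq hgz) hB h0 h1)
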